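/- There exists a constant r₀ such that for every configuration P with P ≠ {(0,0)}: if ρ = s/α ≥ r₀, then s ≤ (1/4)·2^(−ρ). -/

import Mathlib

open MeasureTheory Set
open scoped Classical

noncomputable section

/-- The cake: the unit square `[0,1]²`. -/
def unitSq : Set (ℝ × ℝ) := Set.Icc ((0, 0) : ℝ × ℝ) ((1, 1) : ℝ × ℝ)

/-- A configuration: a finite point set in the unit square containing the origin. -/
def IsConfig (P : Finset (ℝ × ℝ)) : Prop := ((0, 0) : ℝ × ℝ) ∈ P ∧ ↑P ⊆ unitSq

/-- Area of the closed axis-parallel rectangle with lower left corner `a` and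
upper right corner `b`. -/
def rectArea (a b : ℝ × ℝ) : ℝ := (volume (Set.Icc a b)).toReal

/-- A Bob family for `P`, encoded by assigning to each point `p ∈ P` the upper
right corner `q p` of the closed axis-parallel rectangle placed with lower left
corner `p` (a degenerate rectangle `q p = p` encodes an unused point); the
rectangles lie in the unit square and have pairwise disjoint interiors, and
distinct rectangles automatically have distinct lower left corners. -/
def IsBobFamily (P : Finset (ℝ × ℝ)) (q : ℝ × ℝ → ℝ × ℝ) : Prop :=
  (∀ p ∈ P, p ≤ q p) ∧
  (∀ p ∈ P, Set.Icc p (q p) ⊆ unitSq) ∧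
  (∀ p ∈ P, ∀ p' ∈ P, p ≠ p' →
    interior (Set.Icc p (q p)) ∩ interior (Set.Icc p' (q p')) = ∅)

/-- The total area of a Bob family. -/
def famArea (P : Finset (ℝ × ℝ)) (q : ℝ × ℝ → ℝ × ℝ) : ℝ :=
  ∑ p ∈ P, rectArea p (q p)

/-- `bob(P)`: the supremum of the total area over all Bob families for `P`. -/
def bobP (P : Finset (ℝ × ℝ)) : ℝ :=
  sSup { a : ℝ | ∃ q : ℝ × ℝ → ℝ × ℝ, IsBobFamily P q ∧ a = famArea P q }

/-- `bob(n)`: the infimum of `bob(P)` over all configurations with `n` points. -/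
def bobN (n : ℕ) : ℝ :=
  sInf { a : ℝ | ∃ P : Finset (ℝ × ℝ), IsConfig P ∧ P.card = n ∧ a = bobP P }

/-- `n(r)`: the least `n ≥ 1` with `bob(n) ≤ 1/r`, or `∞` if there is none. -/
def nOf (r : ℝ) : ℕ∞ :=
  sInf { N : ℕ∞ | ∃ n : ℕ, N = (n : ℕ∞) ∧ 1 ≤ n ∧ bobN n ≤ 1 / r }

/-- `stairs(P)`: the union of all closed axis-parallel rectangles in the unit
square with lower left corner `(0,0)` whose interior contains no point of `P`. -/
def stairs (P : Finset (ℝ × ℝ)) : Set (ℝ × ℝ) :=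
  ⋃ b ∈ { b : ℝ × ℝ | b ∈ unitSq ∧ ∀ p ∈ P, p ∉ interior (Set.Icc ((0, 0) : ℝ × ℝ) b) },
    Set.Icc ((0, 0) : ℝ × ℝ) b

/-- `s`: the area of `stairs(P)`. -/
def stairsArea (P : Finset (ℝ × ℝ)) : ℝ := (volume (stairs P)).toReal

/-- `α`: the supremum of areas of axis-parallel rectangles contained in `stairs(P)`. -/
def alphaOf (P : Finset (ℝ × ℝ)) : ℝ :=
  sSup { a : ℝ | ∃ c d : ℝ × ℝ, c ≤ d ∧ Set.Icc c d ⊆ stairs P ∧ a = rectArea c d }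

/-- `ρ := s/α`. -/
def rhoOf (P : Finset (ℝ × ℝ)) : ℝ := stairsArea P / alphaOf P

/-- `a` is a minimum of `S`: no other point of `S` is (weakly) dominated-below it. -/
def IsMinOf (S : Set (ℝ × ℝ)) (a : ℝ × ℝ) : Prop :=
  a ∈ S ∧ ∀ b ∈ S, b ≠ a → ¬(b.1 ≤ a.1 ∧ b.2 ≤ a.2)

/-- `p 0, …, p (k-1)` enumerates the minima of `P \ {(0,0)}` in order of
strictly decreasing `y`-coordinate. -/
def EnumMinima (P : Finset (ℝ × ℝ)) (k : ℕ) (p : Fin k → ℝ × ℝ) : Prop :=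
  (∀ i : Fin k, IsMinOf ((↑P : Set (ℝ × ℝ)) \ {((0, 0) : ℝ × ℝ)}) (p i)) ∧
  (∀ q : ℝ × ℝ, IsMinOf ((↑P : Set (ℝ × ℝ)) \ {((0, 0) : ℝ × ℝ)}) q → ∃ i : Fin k, p i = q) ∧
  (∀ i j : Fin k, i < j → (p j).2 < (p i).2)

/-- The sequence `y₀ = 1`, `yᵢ = y(pᵢ)` (with the paper's `pᵢ` being `p (i-1)` here). -/
def YSeq (k : ℕ) (p : Fin k → ℝ × ℝ) (y : ℕ → ℝ) : Prop :=
  y 0 = 1 ∧ ∀ i : Fin k, y (i.1 + 1) = (p i).2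

/-- The rectangle `Bᵢ = [x(pᵢ), 1] × [yᵢ, y_{i-1}]` (0-indexed here). -/
def rectB (k : ℕ) (p : Fin k → ℝ × ℝ) (y : ℕ → ℝ) (i : Fin k) : Set (ℝ × ℝ) :=
  Set.Icc (((p i).1, y (i.1 + 1)) : ℝ × ℝ) ((1, y i.1) : ℝ × ℝ)

/-- `βᵢ`: the area of `Bᵢ`. -/
def betaOf (k : ℕ) (p : Fin k → ℝ × ℝ) (y : ℕ → ℝ) (i : Fin k) : ℝ :=
  (volume (rectB k p y i)).toReal

/-- The affine map sending the rectangle with corners `a ≤ b` onto `[0,1]²`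
(with `a ↦ (0,0)`). -/
def rectMap (a b : ℝ × ℝ) (q : ℝ × ℝ) : ℝ × ℝ :=
  ((q.1 - a.1) / (b.1 - a.1), (q.2 - a.2) / (b.2 - a.2))

/-- `Pᵢ`: the image of `P ∩ Bᵢ` under the affine map sending `Bᵢ` onto `[0,1]²`. -/
def subConfig (P : Finset (ℝ × ℝ)) (k : ℕ) (p : Fin k → ℝ × ℝ) (y : ℕ → ℝ)
    (i : Fin k) : Finset (ℝ × ℝ) :=
  (P.filter (fun q => q ∈ rectB k p y i)).image
    (rectMap (((p i).1, y (i.1 + 1)) : ℝ × ℝ) ((1, y i.1) : ℝ × ℝ))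



lemma volume_Icc_prod (a b : ℝ × ℝ) :
    volume (Set.Icc a b) = ENNReal.ofReal (b.1 - a.1) * ENNReal.ofReal (b.2 - a.2) := by
  rw [Measure.volume_eq_prod, Set.Icc_prod_eq, Measure.prod_prod, Real.volume_Icc, Real.volume_Icc]

lemma rectArea_eq (a b : ℝ × ℝ) (h : a ≤ b) :
    rectArea a b = (b.1 - a.1) * (b.2 - a.2) := by
  rw [rectArea, volume_Icc_prod, ENNReal.toReal_mul, ENNReal.toReal_ofReal (by linarith [h.1]),
    ENNReal.toReal_ofReal (by linarith [h.2])]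

lemma stairs_subset (P : Finset (ℝ × ℝ)) : stairs P ⊆ unitSq := by
  intro z hz
  simp only [stairs, mem_iUnion, mem_setOf_eq, exists_prop] at hz
  obtain ⟨b, ⟨hb, -⟩, hzb⟩ := hz
  exact ⟨hzb.1, le_trans hzb.2 hb.2⟩

lemma rectArea_le_one {P : Finset (ℝ × ℝ)} {c d : ℝ × ℝ}
    (hsub : Set.Icc c d ⊆ stairs P) : rectArea c d ≤ 1 := by
  have h1 : volume (Set.Icc c d) ≤ volume unitSq :=
    measure_mono (hsub.trans (stairs_subset P))
  have h2 : volume unitSq = 1 := by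
    rw [unitSq, volume_Icc_prod]; norm_num
  rw [h2] at h1
  have := ENNReal.toReal_mono (by simp) h1
  simpa [rectArea] using this

lemma alpha_bdd (P : Finset (ℝ × ℝ)) :
    BddAbove { a : ℝ | ∃ c d : ℝ × ℝ, c ≤ d ∧ Set.Icc c d ⊆ stairs P ∧ a = rectArea c d } := by
  refine ⟨1, ?_⟩
  rintro a ⟨c, d, hcd, hsub, rfl⟩
  exact rectArea_le_one hsub

lemma alpha_le_one (P : Finset (ℝ × ℝ)) : alphaOf P ≤ 1 := by
  apply Real.sSup_le _ (by norm_num)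
  rintro a ⟨c, d, hcd, hsub, rfl⟩
  exact rectArea_le_one hsub

lemma prod_le_alpha {P : Finset (ℝ × ℝ)} {b : ℝ × ℝ} (hb : b ∈ unitSq)
    (hfree : ∀ p ∈ P, p ∉ interior (Set.Icc ((0, 0) : ℝ × ℝ) b)) :
    b.1 * b.2 ≤ alphaOf P := by
  apply le_csSup (alpha_bdd P)
  refine ⟨(0, 0), b, hb.1, ?_, ?_⟩
  · exact subset_biUnion_of_mem (u := fun b => Set.Icc ((0,0) : ℝ × ℝ) b) ⟨hb, hfree⟩
  · rw [rectArea_eq _ _ hb.1]; simp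

lemma exists_step (x : ℝ) (n : ℕ) (h : (2/3:ℝ)^n < x) (h1 : x ≤ 1) :
    ∃ j < n, (2/3:ℝ)^(j+1) ≤ x ∧ x ≤ (2/3:ℝ)^j := by
  induction n with
  | zero => norm_num at h; linarith
  | succ n ih =>
    by_cases hx : (2/3:ℝ)^n < x
    · obtain ⟨j, hj, hj2⟩ := ih hx
      exact ⟨j, Nat.lt_succ_of_lt hj, hj2⟩
    · push_neg at hx
      exact ⟨n, Nat.lt_succ_self n, h.le, hx⟩

lemma cover_bound (P : Finset (ℝ × ℝ)) (hα : 0 ≤ alphaOf P) (n : ℕ) :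
    stairsArea P ≤ n * (alphaOf P / 2) + (2/3 : ℝ)^n := by
  set α := alphaOf P with hαdef
  set T : Set (ℝ × ℝ) := Set.Icc ((0 : ℝ), (0 : ℝ)) ((2/3 : ℝ)^n, 1) with hT
  set S : ℕ → Set (ℝ × ℝ) := fun j =>
    Set.Icc (((2/3 : ℝ)^(j+1), (0:ℝ))) (((2/3 : ℝ)^j, min 1 (α * (3/2)^(j+1)))) with hS
  have hsub : stairs P ⊆ T ∪ ⋃ j ∈ Finset.range n, S j := by
    intro z hz
    have hz' := hz
    simp only [stairs, mem_iUnion, mem_setOf_eq, exists_prop] at hz'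
    obtain ⟨b, ⟨hb, hfree⟩, hzb⟩ := hz'
    have hz0 : ((0,0) : ℝ × ℝ) ≤ z := hzb.1
    have hzb2 : z ≤ b := hzb.2
    have hb1 : b ≤ ((1,1) : ℝ × ℝ) := hb.2
    have hzz : z.1 * z.2 ≤ α := by
      calc z.1 * z.2 ≤ b.1 * b.2 :=
            mul_le_mul hzb2.1 hzb2.2 hz0.2 (le_trans hz0.1 hzb2.1)
      _ ≤ α := prod_le_alpha hb hfree
    by_cases hx : z.1 ≤ (2/3 : ℝ)^n
    · left
      exact ⟨⟨hz0.1, hz0.2⟩, ⟨hx, le_trans hzb2.2 hb1.2⟩⟩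
    · right
      push_neg at hx
      have hx1 : z.1 ≤ 1 := le_trans hzb2.1 hb1.1
      obtain ⟨j, hjn, hj1, hj2⟩ := exists_step z.1 n hx hx1
      simp only [mem_iUnion, Finset.mem_range, exists_prop]
      refine ⟨j, hjn, ⟨⟨hj1, hz0.2⟩, ⟨hj2, ?_⟩⟩⟩
      have hinv : (2/3:ℝ)^(j+1) * (3/2:ℝ)^(j+1) = 1 := by
        rw [← mul_pow]; norm_num
      refine le_min (le_trans hzb2.2 hb1.2) ?_
      have h2 : z.2 * (2/3:ℝ)^(j+1) ≤ α := by
        calc z.2 * (2/3:ℝ)^(j+1) ≤ z.2 * z.1 := mul_le_mul_of_nonneg_left hj1 hz0.2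
        _ = z.1 * z.2 := mul_comm _ _
        _ ≤ α := hzz
      have h3 : z.2 * ((2/3:ℝ)^(j+1) * (3/2:ℝ)^(j+1)) ≤ α * (3/2:ℝ)^(j+1) := by
        rw [← mul_assoc]
        exact mul_le_mul_of_nonneg_right h2 (by positivity)
      rwa [hinv, mul_one] at h3
  have hTvol : volume T = ENNReal.ofReal ((2/3:ℝ)^n) := by
    rw [hT, volume_Icc_prod]
    norm_num
  have hSvol : ∀ j, volume (S j) ≤ ENNReal.ofReal (α / 2) := by
    intro j
    rw [hS]
    simp only
    rw [volume_Icc_prod]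
    dsimp only
    have hw : (2/3:ℝ)^j - (2/3:ℝ)^(j+1) = (1/3) * (2/3:ℝ)^j := by ring
    have hw0 : (0:ℝ) ≤ (2/3:ℝ)^j - (2/3:ℝ)^(j+1) := by rw [hw]; positivity
    rw [sub_zero, ← ENNReal.ofReal_mul hw0]
    apply ENNReal.ofReal_le_ofReal
    have hkey : (2/3:ℝ)^j * (3/2:ℝ)^(j+1) = 3/2 := by
      rw [pow_succ, ← mul_assoc, ← mul_pow]; norm_num
    calc ((2/3:ℝ)^j - (2/3:ℝ)^(j+1)) * (min 1 (α * (3/2:ℝ)^(j+1)))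
        ≤ ((2/3:ℝ)^j - (2/3:ℝ)^(j+1)) * (α * (3/2:ℝ)^(j+1)) :=
          mul_le_mul_of_nonneg_left (min_le_right _ _) hw0
    _ = (1/3) * ((2/3:ℝ)^j * (3/2:ℝ)^(j+1)) * α := by rw [hw]; ring
    _ = α / 2 := by rw [hkey]; ring
  have hmeas : volume (stairs P) ≤
      ENNReal.ofReal ((2/3:ℝ)^n) + n * ENNReal.ofReal (α / 2) := by
    calc volume (stairs P) ≤ volume (T ∪ ⋃ j ∈ Finset.range n, S j) := measure_mono hsub
    _ ≤ volume T + volume (⋃ j ∈ Finset.range n, S j) := measure_union_le _ _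
    _ ≤ volume T + ∑ j ∈ Finset.range n, volume (S j) := by
        gcongr
        exact measure_biUnion_finset_le _ _
    _ ≤ ENNReal.ofReal ((2/3:ℝ)^n) + ∑ j ∈ Finset.range n, ENNReal.ofReal (α / 2) := by
        rw [hTvol]
        gcongr with j hj
        exact hSvol j
    _ = ENNReal.ofReal ((2/3:ℝ)^n) + n * ENNReal.ofReal (α / 2) := by
        rw [Finset.sum_const, Finset.card_range, nsmul_eq_mul]
  have hfin : ENNReal.ofReal ((2/3:ℝ)^n) + n * ENNReal.ofReal (α / 2) ≠ ⊤ := by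
    apply ENNReal.add_ne_top.mpr
    exact ⟨ENNReal.ofReal_ne_top, ENNReal.mul_ne_top (by simp) ENNReal.ofReal_ne_top⟩
  have := ENNReal.toReal_mono hfin hmeas
  rw [ENNReal.toReal_add ENNReal.ofReal_ne_top (ENNReal.mul_ne_top (by simp) ENNReal.ofReal_ne_top),
    ENNReal.toReal_mul, ENNReal.toReal_ofReal (by positivity),
    ENNReal.toReal_ofReal (by positivity), ENNReal.toReal_natCast] at this
  rw [stairsArea]
  linarith

lemma final_ineq (ρ : ℝ) (hρ : 10000 ≤ ρ) :
    ρ * (2/3 : ℝ) ^ (2*ρ - 3) ≤ (1/4) * (2 : ℝ) ^ (-ρ) := by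
  have hρ0 : (0:ℝ) < ρ := by linarith
  have key : Real.log ρ + Real.log (2/3) * (2*ρ - 3) ≤
      Real.log (1/4) + Real.log 2 * (-ρ) := by
    set a := Real.log (3/2) with ha
    set b := Real.log 2 with hb
    have h1 : Real.log (2/3) = -a := by
      rw [ha, show (2/3:ℝ) = (3/2)⁻¹ by norm_num, Real.log_inv]
    have h2 : Real.log (1/4) = -(2*b) := by
      rw [hb, show (1/4:ℝ) = ((2:ℝ)^(2:ℕ))⁻¹ by norm_num, Real.log_inv, Real.log_pow]
      push_cast; ring
    have h98 : Real.log (9/8) = 2*a - b := by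
      rw [ha, hb, show (9/8:ℝ) = (3/2)^(2:ℕ) / 2 by norm_num,
        Real.log_div (by positivity) (by norm_num), Real.log_pow]
      push_cast; ring
    have h3 : 1/9 ≤ 2*a - b := by
      have hl := Real.log_le_sub_one_of_pos (show (0:ℝ) < 8/9 by norm_num)
      have : Real.log (9/8) = - Real.log (8/9) := by
        rw [show (9/8:ℝ) = (8/9)⁻¹ by norm_num, Real.log_inv]
      rw [h98] at this
      linarith
    have h4 : a ≤ 1/2 := by
      have := Real.log_le_sub_one_of_pos (show (0:ℝ) < 3/2 by norm_num); linarith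
    have h5 : b ≤ 1 := by
      have := Real.log_le_sub_one_of_pos (show (0:ℝ) < 2 by norm_num); linarith
    set t := Real.sqrt ρ with htdef
    have ht2 : t^2 = ρ := Real.sq_sqrt hρ0.le
    have ht0 : 0 ≤ t := Real.sqrt_nonneg _
    have h7 : 100 ≤ t := by nlinarith
    have h6 : Real.log ρ ≤ 2*t - 2 := by
      have hts : Real.log t = Real.log ρ / 2 := Real.log_sqrt hρ0.le
      have := Real.log_le_sub_one_of_pos (show (0:ℝ) < t by linarith)
      linarith
    have h8 : ρ * (1/9) ≤ ρ * (2*a - b) := mul_le_mul_of_nonneg_left h3 hρ0.le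
    rw [h1, h2]
    nlinarith [h8, h6, h4, h5, ht2, h7, ht0]
  calc ρ * (2/3 : ℝ) ^ (2*ρ - 3)
      = Real.exp (Real.log ρ + Real.log (2/3) * (2*ρ - 3)) := by
        rw [Real.exp_add, Real.exp_log hρ0,
          Real.rpow_def_of_pos (show (0:ℝ) < 2/3 by norm_num)]
  _ ≤ Real.exp (Real.log (1/4) + Real.log 2 * (-ρ)) := Real.exp_le_exp.mpr key
  _ = (1/4) * (2 : ℝ) ^ (-ρ) := by
        rw [Real.exp_add, Real.exp_log (show (0:ℝ) < 1/4 by norm_num),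
          Real.rpow_def_of_pos (show (0:ℝ) < 2 by norm_num)]


/-- If `ρ = s/α ≥ r₀`, then the staircase has small area: `s ≤ (1/4)·2^(−ρ)`. -/
theorem statement1 :
    ∃ r₀ : ℝ, ∀ P : Finset (ℝ × ℝ), IsConfig P → P ≠ {((0, 0) : ℝ × ℝ)} →
      r₀ ≤ rhoOf P →
      stairsArea P ≤ (1 / 4) * (2 : ℝ) ^ (-(rhoOf P)) := by
  refine ⟨10000, fun P hconf hne hρ => ?_⟩
  by_cases hs : stairsArea P ≤ 0
  · refine le_trans hs ?_
    positivity
  push_neg at hs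
  by_cases hαle : alphaOf P ≤ 0
  · exfalso
    have : rhoOf P ≤ 0 := by
      rw [rhoOf]
      exact div_nonpos_of_nonneg_of_nonpos hs.le hαle
    linarith
  push_neg at hαle
  have hρ0 : (0:ℝ) < rhoOf P := by linarith
  have hex : ∃ n : ℕ, (2/3:ℝ)^n < alphaOf P :=
    exists_pow_lt_of_lt_one hαle (by norm_num)
  set n := Nat.find hex with hndef
  have hn : (2/3:ℝ)^n < alphaOf P := Nat.find_spec hex
  have hn0 : n ≠ 0 := by
    intro h
    rw [h, pow_zero] at hn
    exact absurd (alpha_le_one P) (not_le.mpr hn)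
  have hmin : ¬ ((2/3:ℝ)^(n-1) < alphaOf P) :=
    Nat.find_min hex (Nat.pred_lt hn0)
  have hαle2 : alphaOf P ≤ (2/3:ℝ)^(n-1) := not_lt.mp hmin
  have hcov := cover_bound P hαle.le n
  have hrle : rhoOf P ≤ (n:ℝ)/2 + 1 := by
    rw [rhoOf, div_le_iff₀ hαle]
    nlinarith
  have hn1 : 1 ≤ n := Nat.one_le_iff_ne_zero.mpr hn0
  have hcast : ((n-1:ℕ):ℝ) = (n:ℝ) - 1 := by
    rw [Nat.cast_sub hn1]; norm_num
  have hexp : 2*(rhoOf P) - 3 ≤ ((n-1:ℕ):ℝ) := by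
    rw [hcast]; linarith
  have hαle3 : alphaOf P ≤ (2/3:ℝ) ^ (2*(rhoOf P) - 3) := by
    calc alphaOf P ≤ (2/3:ℝ)^(n-1) := hαle2
    _ = (2/3:ℝ) ^ (((n-1:ℕ):ℝ)) := (Real.rpow_natCast _ _).symm
    _ ≤ (2/3:ℝ) ^ (2*(rhoOf P) - 3) :=
        Real.rpow_le_rpow_of_exponent_ge (by norm_num) (by norm_num) hexp
  have hseq : stairsArea P = rhoOf P * alphaOf P := by
    rw [rhoOf, div_mul_cancel₀ _ (ne_of_gt hαle)]
  calc stairsArea P = rhoOf P * alphaOf P := hseq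
  _ ≤ rhoOf P * (2/3:ℝ) ^ (2*(rhoOf P) - 3) :=
      mul_le_mul_of_nonneg_left hαle3 hρ0.le
  _ ≤ (1/4) * (2:ℝ) ^ (-(rhoOf P)) := final_ineq _ hρ
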